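/- For every theory Σ and every attribute implication A ⇒ B annotated by time points, the following three conditions are equivalent: (1) Σ ⊨ A ⇒ B; (2) [A]_Σ ⊨ A ⇒ B; (3) B ⊆ [A]_Σ. -/

import Mathlib

namespace TAI

variable {Y : Type*}

/-- Time shift of a set of time-annotated attributes: `M + j`. -/
def shiftS (M : Set (Y × ℤ)) (j : ℤ) : Set (Y × ℤ) :=
  (fun p : Y × ℤ => (p.1, p.2 + j)) '' M

/-- Time shift of a finite set of time-annotated attributes: `A + j`. -/
def shiftF [DecidableEq Y] (A : Finset (Y × ℤ)) (j : ℤ) : Finset (Y × ℤ) :=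
  A.image (fun p => (p.1, p.2 + j))

/-- An attribute implication over `Y` annotated by time points: a pair
`(A, B)` of finite subsets of `T_Y = Y × ℤ`, read as `A ⇒ B`. -/
abbrev Fml (Y : Type*) := Finset (Y × ℤ) × Finset (Y × ℤ)

/-- `A ⇒ B` is true in `M ⊆ T_Y`: for every `i ∈ ℤ`, `A + i ⊆ M` implies `B + i ⊆ M`. -/
def Holds [DecidableEq Y] (M : Set (Y × ℤ)) (φ : Fml Y) : Prop :=
  ∀ i : ℤ, ↑(shiftF φ.1 i) ⊆ M → ↑(shiftF φ.2 i) ⊆ M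

/-- The models of a theory `T`. -/
def Mods [DecidableEq Y] (T : Set (Fml Y)) : Set (Set (Y × ℤ)) :=
  {M | ∀ φ ∈ T, Holds M φ}

/-- Semantic entailment: `T ⊨ φ`. -/
def Entails [DecidableEq Y] (T : Set (Fml Y)) (φ : Fml Y) : Prop :=
  ∀ M ∈ Mods T, Holds M φ

/-- Semantic closure `[M]_Σ`. -/
def semClos [DecidableEq Y] (T : Set (Fml Y)) (M : Set (Y × ℤ)) : Set (Y × ℤ) :=
  ⋂₀ {N | N ∈ Mods T ∧ M ⊆ N}

/-- Classical (time-point-free) truth: `M ⊨_PL A ⇒ B` iff `A ⊆ M` implies `B ⊆ M`. -/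
def HoldsPL (M : Set (Y × ℤ)) (φ : Fml Y) : Prop :=
  ↑φ.1 ⊆ M → ↑φ.2 ⊆ M

/-- Classical models. -/
def ModsPL (T : Set (Fml Y)) : Set (Set (Y × ℤ)) :=
  {M | ∀ φ ∈ T, HoldsPL M φ}

/-- Classical semantic entailment `⊨_PL`. -/
def EntailsPL (T : Set (Fml Y)) (φ : Fml Y) : Prop :=
  ∀ M ∈ ModsPL T, HoldsPL M φ

/-- `Σ^PL = {A + i ⇒ B + i | A ⇒ B ∈ Σ, i ∈ ℤ}`. -/
def shiftAll [DecidableEq Y] (T : Set (Fml Y)) : Set (Fml Y) :=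
  {ψ | ∃ φ ∈ T, ∃ i : ℤ, ψ = (shiftF φ.1 i, shiftF φ.2 i)}

/-- One step of the syntactic closure construction. -/
def synStep [DecidableEq Y] (T : Set (Fml Y)) (M : Set (Y × ℤ)) : Set (Y × ℤ) :=
  M ∪ ⋃₀ {S | ∃ φ ∈ T, ∃ i : ℤ, ↑(shiftF φ.1 i) ⊆ M ∧ S = (↑(shiftF φ.2 i) : Set (Y × ℤ))}

/-- `M_Σ^n`. -/
def synIter [DecidableEq Y] (T : Set (Fml Y)) (M : Set (Y × ℤ)) : ℕ → Set (Y × ℤ)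
  | 0 => M
  | n + 1 => synStep T (synIter T M n)

/-- The syntactic closure `M_Σ^ω`. -/
def synClos [DecidableEq Y] (T : Set (Fml Y)) (M : Set (Y × ℤ)) : Set (Y × ℤ) :=
  ⋃ n : ℕ, synIter T M n

/-- Provability from `T` using the rules (Ax), (Cut) and (Shf). -/
inductive Prov [DecidableEq Y] (T : Set (Fml Y)) : Fml Y → Prop
  | hyp {φ : Fml Y} : φ ∈ T → Prov T φ
  | ax (A B : Finset (Y × ℤ)) : Prov T (A ∪ B, A)
  | cut {A B C D : Finset (Y × ℤ)} :
      Prov T (A, B) → Prov T (B ∪ C, D) → Prov T (A ∪ C, D)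
  | shf {A B : Finset (Y × ℤ)} (i : ℤ) :
      Prov T (A, B) → Prov T (shiftF A i, shiftF B i)

/-- Provability from `T` using only the rules (Ax) and (Cut) (no time shifts). -/
inductive ProvAC [DecidableEq Y] (T : Set (Fml Y)) : Fml Y → Prop
  | hyp {φ : Fml Y} : φ ∈ T → ProvAC T φ
  | ax (A B : Finset (Y × ℤ)) : ProvAC T (A ∪ B, A)
  | cut {A B C D : Finset (Y × ℤ)} :
      ProvAC T (A, B) → ProvAC T (B ∪ C, D) → ProvAC T (A ∪ C, D)

/-- Provability from `T` using the rules (Ax) and (Cut_i). -/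
inductive ProvCuti [DecidableEq Y] (T : Set (Fml Y)) : Fml Y → Prop
  | hyp {φ : Fml Y} : φ ∈ T → ProvCuti T φ
  | ax (A B : Finset (Y × ℤ)) : ProvCuti T (A ∪ B, A)
  | cuti {A B C D : Finset (Y × ℤ)} (i : ℤ) :
      ProvCuti T (A, shiftF B i) → ProvCuti T (B ∪ C, D) →
      ProvCuti T (A ∪ shiftF C i, shiftF D i)

/-- Provability from `T` using the rules (Ref) and (Sim_i). -/
inductive ProvRS [DecidableEq Y] (T : Set (Fml Y)) : Fml Y → Prop
  | hyp {φ : Fml Y} : φ ∈ T → ProvRS T φ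
  | ref (A : Finset (Y × ℤ)) : ProvRS T (A, A)
  | simi {A B C D : Finset (Y × ℤ)} (i : ℤ) :
      ProvRS T (A, shiftF B i) → ProvRS T (C, D) →
      ProvRS T (A ∪ shiftF (C \ B) i, shiftF D i)

/-- The closure operator induced by a closure system `S`. -/
def closOp (S : Set (Set (Y × ℤ))) (M : Set (Y × ℤ)) : Set (Y × ℤ) :=
  ⋂₀ {N | N ∈ S ∧ M ⊆ N}

/-- The least time point occurring in a finite set (`0` for the empty set). -/
def lo (A : Finset (Y × ℤ)) : ℤ :=
  WithTop.untopD 0 (A.image Prod.snd).min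

/-- The greatest time point occurring in a finite set (`0` for the empty set). -/
def hi (A : Finset (Y × ℤ)) : ℤ :=
  WithBot.unbotD 0 (A.image Prod.snd).max

/-- A formula `A ⇒ B` is predictive if `A ≠ ∅`, `B ≠ ∅`, and every time point in
`A` is less than or equal to every time point in `B`. -/
def Predictive (φ : Fml Y) : Prop :=
  φ.1.Nonempty ∧ φ.2.Nonempty ∧ ∀ p ∈ φ.1, ∀ q ∈ φ.2, p.2 ≤ q.2

lemma shiftF_coe [DecidableEq Y] (A : Finset (Y × ℤ)) (i : ℤ) :
    (↑(shiftF A i) : Set (Y × ℤ)) = shiftS ↑A i := by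
  simp [shiftF, shiftS, Finset.coe_image]

lemma shiftF_zero [DecidableEq Y] (A : Finset (Y × ℤ)) : shiftF A 0 = A := by
  ext p; simp [shiftF]

lemma shiftS_shiftS (M : Set (Y × ℤ)) (i j : ℤ) :
    shiftS (shiftS M i) j = shiftS M (i + j) := by
  simp only [shiftS, Set.image_image]
  funext p; simp [add_assoc]

lemma shiftS_zero (M : Set (Y × ℤ)) : shiftS M 0 = M := by
  simp [shiftS]

lemma shiftS_mono {M N : Set (Y × ℤ)} (h : M ⊆ N) (i : ℤ) : shiftS M i ⊆ shiftS N i :=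
  Set.image_mono h

lemma shiftS_subset_iff {M N : Set (Y × ℤ)} (i : ℤ) :
    shiftS M i ⊆ N ↔ M ⊆ shiftS N (-i) := by
  constructor
  · intro h
    have := shiftS_mono h (-i)
    rwa [shiftS_shiftS, add_neg_cancel, shiftS_zero] at this
  · intro h
    have := shiftS_mono h i
    rwa [shiftS_shiftS, neg_add_cancel, shiftS_zero] at this

lemma shiftS_subset_shiftS {S M : Set (Y × ℤ)} (i j : ℤ) :
    shiftS S i ⊆ shiftS M j ↔ shiftS S (i - j) ⊆ M := by
  constructor
  · intro h
    have := shiftS_mono h (-j)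
    rwa [shiftS_shiftS, shiftS_shiftS, add_neg_cancel, shiftS_zero, ← sub_eq_add_neg] at this
  · intro h
    have := shiftS_mono h j
    rwa [shiftS_shiftS, sub_add_cancel] at this

lemma holds_shift [DecidableEq Y] {M : Set (Y × ℤ)} {φ : Fml Y}
    (h : Holds M φ) (j : ℤ) : Holds (shiftS M j) φ := by
  intro i hA
  rw [shiftF_coe, shiftS_subset_shiftS] at hA
  rw [← shiftF_coe] at hA
  have h2 := h (i - j) hA
  rw [shiftF_coe] at h2 ⊢
  rw [shiftS_subset_shiftS]
  exact h2

lemma semClos_mem_mods [DecidableEq Y] (T : Set (Fml Y)) (M : Set (Y × ℤ)) :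
    semClos T M ∈ Mods T := by
  intro φ hφ i hA p hp
  rw [semClos, Set.mem_sInter]
  rintro N ⟨hN, hMN⟩
  have hAN : (↑(shiftF φ.1 i) : Set (Y × ℤ)) ⊆ N :=
    hA.trans (Set.sInter_subset_of_mem ⟨hN, hMN⟩)
  exact hN φ hφ i hAN hp

lemma subset_semClos [DecidableEq Y] (T : Set (Fml Y)) (M : Set (Y × ℤ)) :
    M ⊆ semClos T M := by
  intro p hp
  rw [semClos, Set.mem_sInter]
  rintro N ⟨_, hMN⟩
  exact hMN hp

lemma semClos_subset [DecidableEq Y] {T : Set (Fml Y)} {M N : Set (Y × ℤ)}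
    (hN : N ∈ Mods T) (hMN : M ⊆ N) : semClos T M ⊆ N :=
  Set.sInter_subset_of_mem ⟨hN, hMN⟩

/-- `Σ ⊨ A ⇒ B` iff `[A]_Σ ⊨ A ⇒ B` iff `B ⊆ [A]_Σ`. -/
theorem entails_iff_semClos [DecidableEq Y] [Fintype Y] [Nonempty Y]
    (T : Set (Fml Y)) (A B : Finset (Y × ℤ)) :
    (Entails T (A, B) ↔ Holds (semClos T ↑A) (A, B)) ∧
    (Entails T (A, B) ↔ ↑B ⊆ semClos T ↑A) := by
  have hmod := semClos_mem_mods T (↑A)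
  have hsub : (↑A : Set (Y × ℤ)) ⊆ semClos T ↑A := subset_semClos T ↑A
  have h12 : Entails T (A, B) → Holds (semClos T ↑A) (A, B) := fun h => h _ hmod
  have h23 : Holds (semClos T ↑A) (A, B) → ↑B ⊆ semClos T ↑A := by
    intro h
    have := h 0 (by rw [show (A, B).1 = A from rfl, shiftF_zero]; exact hsub)
    rwa [show (A, B).2 = B from rfl, shiftF_zero] at this
  have h31 : (↑B ⊆ semClos T ↑A) → Entails T (A, B) := by
    intro hB M hM i hA'
    have hM' : shiftS M (-i) ∈ Mods T := fun φ hφ => holds_shift (hM φ hφ) (-i)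
    rw [show (A, B).1 = A from rfl, shiftF_coe, shiftS_subset_iff] at hA'
    have hclos : semClos T ↑A ⊆ shiftS M (-i) := semClos_subset hM' hA'
    rw [show (A, B).2 = B from rfl, shiftF_coe, shiftS_subset_iff]
    exact hB.trans hclos
  exact ⟨⟨h12, fun h => h31 (h23 h)⟩, ⟨fun h => h23 (h12 h), h31⟩⟩

end TAI
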